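/- arXiv:1504.04642 — 3 statements merged into one kernel-verified Lean document; each statement's English description precedes it below -/
import Mathlib

section
/- Let Γ be a cocompact Fuchsian group of signature (g; e₁, …, e_r) with hyperbolic coarea 2π(2g − 2 + Σᵢ(1 − 1/eᵢ)) ≤ 2π·a for some real a > 0. If Q is an elementary abelian 2-group quotient of Γ, then the 2-rank of Q is at most ⌊2(a + 2)⌋ − 1. -/
open Real
open scoped commutatorElement

/-- Generators for a cocompact Fuchsian group of signature `(g; e₁, …, e_r)`:
`2g` hyperbolic generators `a₁, b₁, …, a_g, b_g` and `r` elliptic generators `x₁, …, x_r`. -/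
def FuchsianGen (g r : ℕ) : Type := Fin g ⊕ Fin g ⊕ Fin r

/-- The defining relations of a cocompact Fuchsian group of signature `(g; e₁, …, e_r)`:
`xᵢ^{eᵢ} = 1` and `[a₁,b₁]⋯[a_g,b_g]·x₁⋯x_r = 1`. -/
def FuchsianRels (g r : ℕ) (e : Fin r → ℕ) : Set (FreeGroup (FuchsianGen g r)) :=
  {w | (∃ i : Fin r, w = (FreeGroup.of (Sum.inr (Sum.inr i))) ^ (e i)) ∨
    w = ((List.finRange g).map fun i =>
          ⁅FreeGroup.of (Sum.inl i : FuchsianGen g r), FreeGroup.of (Sum.inr (Sum.inl i) : FuchsianGen g r)⁆).prod *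
        ((List.finRange r).map fun i => FreeGroup.of (Sum.inr (Sum.inr i))).prod}

/-- A cocompact Fuchsian group of signature `(g; e₁, …, e_r)`, presented by its standard
generators and relations. -/
def FuchsianGroup (g r : ℕ) (e : Fin r → ℕ) : Type := PresentedGroup (FuchsianRels g r e)

noncomputable instance (g r : ℕ) (e : Fin r → ℕ) : Group (FuchsianGroup g r e) :=
  inferInstanceAs (Group (PresentedGroup (FuchsianRels g r e)))


/-- Images of free-group generators under a surjection onto `Multiplicative V` span `V`. -/
lemma freeGroup_span_aux {α : Type*} {V : Type*} [AddCommGroup V] [Module (ZMod 2) V]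
    (φ : FreeGroup α →* Multiplicative V) (hφ : Function.Surjective φ) :
    Submodule.span (ZMod 2) (Set.range fun s => Multiplicative.toAdd (φ (FreeGroup.of s))) = ⊤ := by
  have hall : ∀ q : FreeGroup α,
      Multiplicative.toAdd (φ q) ∈
        Submodule.span (ZMod 2)
          (Set.range fun s => Multiplicative.toAdd (φ (FreeGroup.of s))) := by
    intro q
    induction q using FreeGroup.induction_on with
    | C1 => rw [map_one]; exact Submodule.zero_mem _
    | of s => exact Submodule.subset_span ⟨s, rfl⟩
    | inv_of s h => rw [map_inv]; exact Submodule.neg_mem _ h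
    | mul q₁ q₂ h1 h2 => rw [map_mul]; exact Submodule.add_mem _ h1 h2
  rw [Submodule.eq_top_iff']
  intro x
  obtain ⟨q, hq⟩ := hφ (Multiplicative.ofAdd x)
  have h := hall q
  rw [hq] at h
  simpa using h

/-- A homomorphism to a commutative group kills any product of commutators. -/
lemma map_list_prod_commutator {G H : Type*} [Group G] [CommGroup H] (φ : G →* H)
    (l : List (G × G)) : φ ((l.map fun p => ⁅p.1, p.2⁆).prod) = 1 := by
  rw [map_list_prod]
  apply List.prod_eq_one
  intro x hx
  rw [List.map_map, List.mem_map] at hx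
  obtain ⟨p, -, rfl⟩ := hx
  show φ ⁅p.1, p.2⁆ = 1
  rw [map_commutatorElement]
  exact commutatorElement_eq_one_iff_mul_comm.mpr (mul_comm _ _)

/-- Auxiliary: from an elementary abelian quotient of a Fuchsian group we extract vectors
attached to the generators which span, and whose elliptic part sums to zero. -/
lemma fuchsian_aux (g r : ℕ) (e : Fin r → ℕ) (k : ℕ) (Q : Type*) [CommGroup Q]
    (f : FuchsianGroup g r e →* Q) (hf : Function.Surjective f)
    (eq : Q ≃* (Fin k → Multiplicative (ZMod 2))) :
    ∃ w : FuchsianGen g r → (Fin k → ZMod 2),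
      Submodule.span (ZMod 2) (Set.range w) = ⊤ ∧
      ∑ i : Fin r, w (Sum.inr (Sum.inr i)) = 0 := by
  classical
  set N := Subgroup.normalClosure (FuchsianRels g r e) with hN
  let π₁ : FreeGroup (FuchsianGen g r) →* FuchsianGroup g r e := QuotientGroup.mk' N
  let φ : FreeGroup (FuchsianGen g r) →* Multiplicative (Fin k → ZMod 2) :=
    ((MulEquiv.funMultiplicative (Fin k) (ZMod 2)).symm.toMonoidHom.comp
      (eq.toMonoidHom.comp (f.comp π₁)))
  have hφ : Function.Surjective φ :=
    (MulEquiv.funMultiplicative (Fin k) (ZMod 2)).symm.surjective.comp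
      (eq.surjective.comp (hf.comp (QuotientGroup.mk'_surjective N)))
  refine ⟨fun s => Multiplicative.toAdd (φ (FreeGroup.of s)), freeGroup_span_aux φ hφ, ?_⟩
  -- the long relation
  have hker : ∀ x : FreeGroup (FuchsianGen g r), x ∈ N → φ x = 1 := by
    intro x hx
    have hq : π₁ x = 1 := (QuotientGroup.eq_one_iff _).mpr hx
    show (MulEquiv.funMultiplicative (Fin k) (ZMod 2)).symm (eq (f (π₁ x))) = 1
    rw [hq, map_one, map_one, map_one]
  have hmem :
      (((List.finRange g).map fun i =>
          ⁅FreeGroup.of (Sum.inl i : FuchsianGen g r),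
            FreeGroup.of (Sum.inr (Sum.inl i) : FuchsianGen g r)⁆).prod *
        ((List.finRange r).map fun i =>
          FreeGroup.of (Sum.inr (Sum.inr i) : FuchsianGen g r)).prod) ∈ N :=
    Subgroup.subset_normalClosure (Or.inr rfl)
  have h1 := hker _ hmem
  erw [map_mul φ] at h1
  have hC : φ (((List.finRange g).map fun i =>
      ⁅FreeGroup.of (Sum.inl i : FuchsianGen g r),
        FreeGroup.of (Sum.inr (Sum.inl i) : FuchsianGen g r)⁆).prod) = 1 := by
    have := map_list_prod_commutator φ ((List.finRange g).map fun i =>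
      (FreeGroup.of (Sum.inl i : FuchsianGen g r),
       FreeGroup.of (Sum.inr (Sum.inl i) : FuchsianGen g r)))
    rw [List.map_map] at this
    exact this
  rw [hC, one_mul] at h1
  have h2 : (∏ i : Fin r, φ (FreeGroup.of (Sum.inr (Sum.inr i) : FuchsianGen g r))) = 1 := by
    rw [Fin.prod_univ_def]
    erw [map_list_prod, List.map_map] at h1
    exact h1
  calc ∑ i : Fin r, Multiplicative.toAdd (φ (FreeGroup.of (Sum.inr (Sum.inr i) : FuchsianGen g r)))
      = Multiplicative.toAdd (∏ i : Fin r, φ (FreeGroup.of (Sum.inr (Sum.inr i) : FuchsianGen g r))) :=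
        (toAdd_prod _ _).symm
    _ = 0 := by rw [h2]; rfl

/-- If a cocompact Fuchsian group of signature `(g; e₁, …, e_r)` has hyperbolic coarea
`2π(2g − 2 + Σᵢ(1 − 1/eᵢ)) ≤ 2π·a` with `a > 0`, then any elementary abelian `2`-group
quotient of it has `2`-rank at most `⌊2(a + 2)⌋ − 1`. -/
theorem fuchsian_two_rank_bound
    (g r : ℕ) (e : Fin r → ℕ) (he : ∀ i, 2 ≤ e i)
    (a : ℝ) (ha : 0 < a)
    (hpos : 0 < 2 * π * (2 * (g : ℝ) - 2 + ∑ i : Fin r, (1 - 1 / (e i : ℝ))))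
    (harea : 2 * π * (2 * (g : ℝ) - 2 + ∑ i : Fin r, (1 - 1 / (e i : ℝ))) ≤ 2 * π * a)
    (k : ℕ) (Q : Type*) [CommGroup Q]
    (f : FuchsianGroup g r e →* Q) (hf : Function.Surjective f)
    (hQ : Nonempty (Q ≃* (Fin k → Multiplicative (ZMod 2)))) :
    (k : ℤ) ≤ ⌊2 * (a + 2)⌋ - 1 := by
  classical
  obtain ⟨eq⟩ := hQ
  obtain ⟨w, hspan, hrel⟩ := fuchsian_aux g r e k Q f hf eq
  have hfr : Module.finrank (ZMod 2) (Fin k → ZMod 2) = k := Module.finrank_fin_fun (ZMod 2)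
  -- area inequality, with 2π cancelled
  have hπ : (0:ℝ) < 2 * π := by positivity
  have harea' : 2 * (g:ℝ) - 2 + ∑ i : Fin r, (1 - 1/(e i:ℝ)) ≤ a :=
    le_of_mul_le_mul_left harea hπ
  have hsum : (r:ℝ)/2 ≤ ∑ i : Fin r, (1 - 1/(e i:ℝ)) := by
    have : ∀ i : Fin r, (1/2 : ℝ) ≤ 1 - 1/(e i:ℝ) := by
      intro i
      have h2 : (2:ℝ) ≤ (e i : ℝ) := by exact_mod_cast he i
      have : 1/(e i:ℝ) ≤ 1/2 := one_div_le_one_div_of_le (by norm_num) h2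
      linarith
    calc (r:ℝ)/2 = ∑ _i : Fin r, (1/2 : ℝ) := by
          rw [Finset.sum_const, Finset.card_univ, Fintype.card_fin]; ring
      _ ≤ _ := Finset.sum_le_sum fun i _ => this i
  have earea : 2 * (g:ℝ) - 2 + (r:ℝ)/2 ≤ a := by linarith
  have hkb : (k:ℝ) + 1 ≤ 2 * (a + 2) := by
    clear hpos harea hsum harea' hf he
    clear f eq
    revert earea w hspan hrel
    cases r with
    | zero =>
      intro w hspan hrel earea
      have hk : k ≤ 2 * g := by
        have hv : Submodule.span (ZMod 2)
            (Set.range (fun s : Fin g ⊕ Fin g ⊕ Fin 0 => w s)) = ⊤ := hspan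
        have hle := finrank_le_of_span_eq_top hv
        rw [hfr] at hle
        simpa using hle.trans (le_of_eq (by simp; omega))
      have hk' : (k:ℝ) ≤ 2 * g := by exact_mod_cast hk
      push_cast at earea
      linarith
    | succ m =>
      intro w hspan hrel earea
      have hrel' : w (Sum.inr (Sum.inr (Fin.last m))) =
          - ∑ i : Fin m, w (Sum.inr (Sum.inr i.castSucc)) := by
        rw [Fin.sum_univ_castSucc] at hrel
        exact eq_neg_of_add_eq_zero_right hrel
      have hv : Submodule.span (ZMod 2) (Set.range (fun s : Fin g ⊕ Fin g ⊕ Fin m =>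
          w (Sum.map id (Sum.map id Fin.castSucc) s))) = ⊤ := by
        rw [eq_top_iff, ← hspan, Submodule.span_le]
        rintro _ ⟨s, rfl⟩
        match s with
        | Sum.inl i => exact Submodule.subset_span ⟨Sum.inl i, rfl⟩
        | Sum.inr (Sum.inl i) => exact Submodule.subset_span ⟨Sum.inr (Sum.inl i), rfl⟩
        | Sum.inr (Sum.inr j) =>
          induction j using Fin.lastCases with
          | last =>
            rw [hrel']
            exact Submodule.neg_mem _ (Submodule.sum_mem _ fun i _ =>
              Submodule.subset_span ⟨Sum.inr (Sum.inr i), rfl⟩)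
          | cast i => exact Submodule.subset_span ⟨Sum.inr (Sum.inr i), rfl⟩
      have hk : k ≤ 2 * g + m := by
        have hle := finrank_le_of_span_eq_top hv
        rw [hfr] at hle
        refine hle.trans (le_of_eq ?_)
        simp
        omega
      have hk' : (k:ℝ) ≤ 2 * g + m := by exact_mod_cast hk
      push_cast at earea
      linarith
  have hfl : (k:ℤ) + 1 ≤ ⌊2 * (a + 2)⌋ := Int.le_floor.mpr (by push_cast; linarith)
  linarith
end

section
/- If h(k,2,B) is a power of 2 dividing the class number h of k, and an inequality of the form 32π² ≥ c₁·R·u·exp(c₂·n − c₃/h(k,2,B)) holds with c₁ = 70.497, c₂ = −0.082, c₃ = 19.075, R ≥ 0.0062·e^{0.738n}, and u ≥ 2, then n ≤ 38. -/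
open Real

set_option maxHeartbeats 1000000 in
/-- If `h(k,2,B)` is a power of 2 dividing the class number, and
`70.497·R·u·exp(−0.082·n − 19.075/h) ≤ 32π²` holds with `R ≥ 0.0062·e^{0.738n}` and
`u ≥ 2`, then `n ≤ 38`. -/
theorem degree_bound_38
    (n : ℕ) (hn : 2 ≤ n) (h : ℕ) (hpow : ∃ j : ℕ, h = 2 ^ j)
    (R u : ℝ) (hR : 0.0062 * Real.exp (0.738 * n) ≤ R) (hu : 2 ≤ u)
    (hineq : 70.497 * R * u * Real.exp (-0.082 * n - 19.075 / h) ≤ 32 * π ^ 2) :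
    n ≤ 38 := by
  by_contra hcon
  push_neg at hcon
  have hn39 : (39 : ℝ) ≤ (n : ℝ) := by exact_mod_cast hcon
  -- h ≥ 1
  obtain ⟨j, hj⟩ := hpow
  have hh1 : (1 : ℝ) ≤ (h : ℝ) := by
    have : 1 ≤ h := by rw [hj]; exact Nat.one_le_two_pow
    exact_mod_cast this
  have hhpos : (0 : ℝ) < (h : ℝ) := by linarith
  have hdiv : 19.075 / (h : ℝ) ≤ 19.075 := by
    rw [div_le_iff₀ hhpos]; nlinarith
  have hexp1 : Real.exp (-0.082 * n - 19.075) ≤ Real.exp (-0.082 * n - 19.075 / h) := by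
    apply Real.exp_le_exp.mpr; linarith
  have hRpos : 0 < 0.0062 * Real.exp (0.738 * n) := by positivity
  have hepos : 0 < Real.exp (-0.082 * n - 19.075) := Real.exp_pos _
  have hchain : 70.497 * (0.0062 * Real.exp (0.738 * n)) * 2 * Real.exp (-0.082 * n - 19.075)
      ≤ 32 * π ^ 2 := by
    calc 70.497 * (0.0062 * Real.exp (0.738 * n)) * 2 * Real.exp (-0.082 * n - 19.075)
        ≤ 70.497 * R * u * Real.exp (-0.082 * n - 19.075 / h) := by
          have h1 : 70.497 * (0.0062 * Real.exp (0.738 * n)) * 2 ≤ 70.497 * R * u := by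
            have hR' : 0.0062 * Real.exp (0.738 * n) ≤ R := hR
            nlinarith [hRpos, hR', hu]
          have h2 : 0 ≤ 70.497 * (0.0062 * Real.exp (0.738 * n)) * 2 := by positivity
          nlinarith [Real.exp_pos (-0.082 * (n:ℝ) - 19.075 / h), hexp1]
      _ ≤ 32 * π ^ 2 := hineq
  -- combine exponentials
  have hcomb : Real.exp (0.738 * n) * Real.exp (-0.082 * n - 19.075)
      = Real.exp (0.656 * n - 19.075) := by
    rw [← Real.exp_add]; ring_nf
  have hlow : Real.exp (6.509) ≤ Real.exp (0.656 * (n:ℝ) - 19.075) := by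
    apply Real.exp_le_exp.mpr; nlinarith
  -- lower bound exp(6.509)
  have he : (2.7182818283 : ℝ) < Real.exp 1 := Real.exp_one_gt_d9
  have h509 : (1.509 : ℝ) ≤ Real.exp 0.509 := by
    have := Real.add_one_le_exp (0.509 : ℝ); linarith
  have hsplit : Real.exp (6.509 : ℝ) = (Real.exp 1)^6 * Real.exp 0.509 := by
    rw [← Real.exp_nat_mul]
    rw [← Real.exp_add]; norm_num
  have he6 : (2.7182818283 : ℝ)^6 ≤ (Real.exp 1)^6 := by
    apply pow_le_pow_left₀ (by norm_num) (le_of_lt he)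
  have hbig : (607 : ℝ) ≤ Real.exp (6.509 : ℝ) := by
    rw [hsplit]
    have hpos6 : (0:ℝ) ≤ (2.7182818283 : ℝ)^6 := by positivity
    calc (607 : ℝ) ≤ (2.7182818283 : ℝ)^6 * 1.509 := by norm_num
      _ ≤ (Real.exp 1)^6 * Real.exp 0.509 := by
          apply mul_le_mul he6 h509 (by norm_num) (by positivity)
  have hpi : π < 3.15 := by
    have := Real.pi_lt_d2; linarith
  have hpi0 : 0 < π := Real.pi_pos
  have hE : 0.8741628 * Real.exp (0.656 * (n:ℝ) - 19.075) ≤ 32 * π ^ 2 := by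
    calc 0.8741628 * Real.exp (0.656 * (n:ℝ) - 19.075)
        = 70.497 * (0.0062 * Real.exp (0.738 * n)) * 2 * Real.exp (-0.082 * n - 19.075) := by
          rw [← hcomb]; ring
      _ ≤ 32 * π ^ 2 := hchain
  have hE2 : 0.8741628 * 607 ≤ 0.8741628 * Real.exp (0.656 * (n:ℝ) - 19.075) := by
    exact mul_le_mul_of_nonneg_left (le_trans hbig hlow) (by norm_num)
  have hπ2 : π ^ 2 < 9.9225 := by nlinarith [hpi, hpi0]
  nlinarith [hE, hE2, hπ2]
end

section
/- With the hypotheses of the previous covolume inequality (constants c₁ = 70.497, c₂ = −0.082, c₃ = 19.075, regulator bound R ≥ 0.0062·e^{0.738n}, u ≥ 2, bound 32π²), if n = 24 then h(k,2,B) ≤ 1, i.e., h(k,2,B) = 1. -/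
open Real

/-- With the same covolume inequality in degree `n = 24`, the quantity `h = h(k,2,B)`
(a power of 2) satisfies `h ≤ 1`, i.e. `h = 1`. -/
theorem class_number_bound_degree_24
    (h : ℕ) (hpow : ∃ j : ℕ, h = 2 ^ j)
    (R u : ℝ) (hR : 0.0062 * Real.exp (0.738 * 24) ≤ R) (hu : 2 ≤ u)
    (hineq : 70.497 * R * u * Real.exp (-0.082 * 24 - 19.075 / h) ≤ 32 * π ^ 2) :
    h = 1 := by
  obtain ⟨j, rfl⟩ := hpow
  rcases Nat.eq_zero_or_pos j with hj | hj
  · simp [hj]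
  exfalso
  have hh2 : (2:ℝ) ≤ ((2^j : ℕ) : ℝ) := by
    have : (2:ℕ) ^ 1 ≤ 2 ^ j := Nat.pow_le_pow_right (by norm_num) hj
    exact_mod_cast (by simpa using this)
  have hhpos : (0:ℝ) < ((2^j : ℕ) : ℝ) := by linarith
  -- bound the exponent from below
  have hdiv : 19.075 / ((2^j : ℕ) : ℝ) ≤ 19.075 / 2 :=
    div_le_div_of_nonneg_left (by norm_num) (by norm_num) hh2
  have hexp1 : Real.exp (-11.5055) ≤ Real.exp (-0.082 * 24 - 19.075 / ((2^j : ℕ) : ℝ)) := by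
    apply Real.exp_le_exp.2
    nlinarith
  have hexppos := Real.exp_pos (-0.082 * 24 - 19.075 / ((2^j : ℕ) : ℝ))
  have hRpos : (0:ℝ) < R := lt_of_lt_of_le (by positivity) hR
  -- combine
  have key : 70.497 * (0.0062 * Real.exp (0.738 * 24)) * 2 * Real.exp (-11.5055)
      ≤ 70.497 * R * u * Real.exp (-0.082 * 24 - 19.075 / ((2^j : ℕ) : ℝ)) := by
    have h1 : 70.497 * (0.0062 * Real.exp (0.738 * 24)) * 2 ≤ 70.497 * R * u := by
      nlinarith [Real.exp_pos (0.738 * 24)]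
    nlinarith [Real.exp_pos (-11.5055), mul_le_mul h1 hexp1 (le_of_lt (Real.exp_pos _))
      (by positivity)]
  have hcomb : 70.497 * 0.0062 * 2 * Real.exp (6.2065) ≤ 32 * π ^ 2 := by
    have : Real.exp (0.738 * 24) * Real.exp (-11.5055) = Real.exp (6.2065) := by
      rw [← Real.exp_add]; norm_num
    nlinarith [key.trans hineq]
  -- numeric contradiction
  have he6 : (403:ℝ) < Real.exp 6.2065 := by
    have h1 : (2.7182818283:ℝ) ^ (6:ℕ) ≤ Real.exp 1 ^ (6:ℕ) :=
      pow_le_pow_left₀ (by norm_num) (le_of_lt Real.exp_one_gt_d9) 6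
    have h2 : Real.exp 1 ^ (6:ℕ) = Real.exp 6 := by
      rw [← Real.exp_nat_mul]; norm_num
    have h3 : Real.exp 6 ≤ Real.exp 6.2065 := Real.exp_le_exp.2 (by norm_num)
    nlinarith
  have hpi : π < 3.141593 := by
    have := Real.pi_lt_d6
    linarith
  have hpipos := Real.pi_pos
  nlinarith
end
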